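/- Mill's ratio r(x) = e^{x²/2} ∫_x^∞ e^{-t²/2} dt satisfies, for all x ≥ 0: 2/(x + sqrt(x² + 4)) < r(x) < 4/(3x + sqrt(x² + 8)). -/

import Mathlib

open MeasureTheory

/-- Mill's ratio of the standard normal distribution:
`r(x) = e^{x²/2} ∫_x^∞ e^{-t²/2} dt`. -/
noncomputable def millsRatio (x : ℝ) : ℝ :=
  Real.exp (x ^ 2 / 2) * ∫ t in Set.Ioi x, Real.exp (-t ^ 2 / 2)

namespace MillsAux

open Real Set Filter Topology

set_option maxHeartbeats 1000000

noncomputable def g (t : ℝ) : ℝ := Real.exp (-t ^ 2 / 2)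

noncomputable def Q (x : ℝ) : ℝ := ∫ t in Set.Ioi x, g t

lemma g_cont : Continuous g := by unfold g; continuity

lemma g_pos (t : ℝ) : 0 < g t := Real.exp_pos _

lemma g_int : Integrable g := by
  have h := integrable_exp_neg_mul_sq (b := (1/2:ℝ)) (by norm_num)
  convert h using 2 with t
  unfold g; ring_nf

lemma tg_int : Integrable (fun t : ℝ => t * g t) := by
  have h := integrable_mul_exp_neg_mul_sq (b := (1/2:ℝ)) (by norm_num)
  convert h using 2 with t
  unfold g; ring_nf

lemma g_hasDeriv (y : ℝ) : HasDerivAt g (g y * (-y)) y := by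
  have h2 : HasDerivAt (fun t : ℝ => -t ^ 2 / 2) (-y) y := by
    have h1 := ((hasDerivAt_pow 2 y).neg).div_const 2
    refine h1.congr_deriv ?_
    push_cast; ring
  unfold g; simpa using h2.exp

lemma g_tendsto : Tendsto g atTop (𝓝 0) := by
  have h1 : Tendsto (fun t : ℝ => -t ^ 2 / 2) atTop atBot := by
    apply Filter.Tendsto.atBot_div_const (by norm_num : (0:ℝ) < 2)
    exact tendsto_neg_atTop_atBot.comp (tendsto_pow_atTop two_ne_zero)
  exact Real.tendsto_exp_atBot.comp h1

lemma Q_pos (x : ℝ) : 0 < Q x := by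
  rw [Q]
  rw [setIntegral_pos_iff_support_of_nonneg_ae]
  · have : Function.support g ∩ Set.Ioi x = Set.Ioi x := by
      rw [Set.inter_eq_right]
      intro t _
      exact (g_pos t).ne'
    rw [this]
    simp [Real.volume_Ioi]
  · exact Filter.Eventually.of_forall (fun t => (g_pos t).le)
  · exact g_int.integrableOn

lemma tg_integral (x : ℝ) : ∫ t in Set.Ioi x, t * g t = g x := by
  have hderiv : ∀ y ∈ Set.Ici x, HasDerivAt (fun t => -g t) (y * g y) y := by
    intro y _
    have := (g_hasDeriv y).neg
    refine this.congr_deriv ?_; ring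
  have hlim : Tendsto (fun t => -g t) atTop (𝓝 0) := by
    simpa using g_tendsto.neg
  have hint : IntegrableOn (fun t => t * g t) (Set.Ioi x) := tg_int.integrableOn
  have h := integral_Ioi_of_hasDerivAt_of_tendsto' hderiv hint hlim
  simpa using h

lemma Q_eq (y : ℝ) : Q y = Q 0 - ∫ t in (0:ℝ)..y, g t := by
  have h1 : (∫ t in Set.Iic y, g t) + Q y = ∫ t, g t :=
    intervalIntegral.integral_Iic_add_Ioi g_int.integrableOn g_int.integrableOn
  have h2 : (∫ t in Set.Iic (0:ℝ), g t) + Q 0 = ∫ t, g t :=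
    intervalIntegral.integral_Iic_add_Ioi g_int.integrableOn g_int.integrableOn
  have h3 : (∫ t in Set.Iic y, g t) - ∫ t in Set.Iic (0:ℝ), g t = ∫ t in (0:ℝ)..y, g t :=
    intervalIntegral.integral_Iic_sub_Iic g_int.integrableOn g_int.integrableOn
  linarith

lemma Q_hasDeriv (x : ℝ) : HasDerivAt Q (-(g x)) x := by
  have h1 : HasDerivAt (fun y => ∫ t in (0:ℝ)..y, g t) (g x) x :=
    intervalIntegral.integral_hasDerivAt_right g_int.intervalIntegrable
      g_cont.stronglyMeasurable.stronglyMeasurableAtFilter g_cont.continuousAt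
  have h2 : HasDerivAt (fun y => Q 0 - ∫ t in (0:ℝ)..y, g t) (-(g x)) x :=
    (hasDerivAt_const _ _).sub h1 |>.congr_deriv (by simp)
  exact h2.congr_of_eventuallyEq (Filter.Eventually.of_forall fun y => Q_eq y)

lemma mills_eq (x : ℝ) : millsRatio x = Real.exp (x ^ 2 / 2) * Q x := rfl

lemma r_pos (x : ℝ) : 0 < millsRatio x := by
  rw [mills_eq]; exact mul_pos (Real.exp_pos _) (Q_pos x)

lemma exp_mul_g (x : ℝ) : Real.exp (x ^ 2 / 2) * g x = 1 := by
  rw [g, ← Real.exp_add]; ring_nf; exact Real.exp_zero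

lemma xQ_lt (x : ℝ) : x * Q x < g x := by
  have h1 : 0 < ∫ t in Set.Ioi x, (t - x) * g t := by
    rw [setIntegral_pos_iff_support_of_nonneg_ae]
    · have hsub : Set.Ioi x ⊆ Function.support (fun t => (t - x) * g t) ∩ Set.Ioi x := by
        intro t ht
        refine ⟨?_, ht⟩
        simp only [Function.mem_support]
        exact mul_ne_zero (by simp [sub_ne_zero]; exact ne_of_gt ht) (g_pos t).ne'
      refine lt_of_lt_of_le ?_ (measure_mono hsub)
      simp [Real.volume_Ioi]
    · rw [EventuallyLE, ae_restrict_iff' measurableSet_Ioi]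
      refine Filter.Eventually.of_forall fun t ht => ?_
      exact mul_nonneg (by simp; linarith [ht.out]) (g_pos t).le
    · have : IntegrableOn (fun t => t * g t - x * g t) (Set.Ioi x) :=
        (tg_int.integrableOn.sub ((g_int.const_mul x).integrableOn))
      exact this.congr_fun (fun t _ => by ring) measurableSet_Ioi
  have h2 : (∫ t in Set.Ioi x, (t - x) * g t) = g x - x * Q x := by
    have : (∫ t in Set.Ioi x, (t - x) * g t) =
        (∫ t in Set.Ioi x, t * g t) - ∫ t in Set.Ioi x, x * g t := by
      rw [← integral_sub tg_int.integrableOn ((g_int.const_mul x).integrableOn)]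
      congr 1; ext t; ring
    rw [this, tg_integral, integral_const_mul]
    rfl
  linarith [h2 ▸ h1]

lemma xr_lt_one (x : ℝ) : x * millsRatio x < 1 := by
  have h := xQ_lt x
  have he := Real.exp_pos (x ^ 2 / 2)
  have := exp_mul_g x
  rw [mills_eq]
  nlinarith

lemma r_hasDeriv (x : ℝ) : HasDerivAt millsRatio (x * millsRatio x - 1) x := by
  have h1 : HasDerivAt (fun y : ℝ => Real.exp (y ^ 2 / 2)) (Real.exp (x ^ 2 / 2) * x) x := by
    have hp : HasDerivAt (fun y : ℝ => y ^ 2 / 2) (x) x := by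
      have := (hasDerivAt_pow 2 x).div_const 2
      refine this.congr_deriv ?_; push_cast; ring
    simpa using hp.exp
  have h2 := h1.mul (Q_hasDeriv x)
  have : HasDerivAt (fun y => Real.exp (y ^ 2 / 2) * Q y) (x * millsRatio x - 1) x := by
    refine h2.congr_deriv ?_
    rw [mills_eq, show (1:ℝ) = Real.exp (x ^ 2 / 2) * g x from (exp_mul_g x).symm]
    ring
  exact this.congr_of_eventuallyEq (Filter.Eventually.of_forall fun y => mills_eq y)

lemma key_neg (w w' : ℝ → ℝ) (a : ℝ)
    (hd : ∀ x, a ≤ x → HasDerivAt w (w' x) x)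
    (hpos : ∀ x, a ≤ x → 0 < w' x)
    (hlim : Tendsto w atTop (𝓝 0)) : w a < 0 := by
  have hmono : StrictMonoOn w (Set.Ici a) := by
    apply strictMonoOn_of_deriv_pos (convex_Ici a)
    · exact fun x hx => (hd x hx).continuousAt.continuousWithinAt
    · intro x hx
      rw [interior_Ici] at hx
      rw [(hd x hx.le).deriv]
      exact hpos x hx.le
  have h1 : w a < w (a + 1) := hmono (Set.self_mem_Ici) (by simp) (by linarith)
  have h2 : w (a + 1) ≤ 0 := by
    refine ge_of_tendsto hlim ?_
    filter_upwards [eventually_ge_atTop (a + 1)] with b hb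
    exact hmono.monotoneOn (by simp) (by simp; linarith) hb
  linarith

lemma key_pos (w w' : ℝ → ℝ) (a : ℝ)
    (hd : ∀ x, a ≤ x → HasDerivAt w (w' x) x)
    (hneg : ∀ x, a ≤ x → w' x < 0)
    (hlim : Tendsto w atTop (𝓝 0)) : 0 < w a := by
  have := key_neg (fun x => -w x) (fun x => -w' x) a
    (fun x hx => (hd x hx).neg) (fun x hx => by simpa using hneg x hx) (by simpa using hlim.neg)
  simp only [neg_lt_zero] at this
  linarith

lemma r_lt_one (y : ℝ) (hy : 1 ≤ y) : millsRatio y < 1 := by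
  have h := xr_lt_one y
  have hr := r_pos y
  nlinarith

lemma lower_master (x : ℝ) (hx : 0 ≤ x) :
    1 < millsRatio x ^ 2 + x * millsRatio x := by
  set r := millsRatio with hrdef
  have hd : ∀ y, x ≤ y → HasDerivAt (fun y => (1 - y * r y - r y ^ 2) * g y)
      ((r y * (1 - y * r y)) * g y) y := by
    intro y _
    have hG : HasDerivAt (fun y => 1 - y * r y - r y ^ 2)
        (-(1 * r y + y * (y * r y - 1)) - 2 * r y * (y * r y - 1)) y := by
      have := (((hasDerivAt_const y (1:ℝ)).sub ((hasDerivAt_id y).mul (r_hasDeriv y))).sub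
        ((r_hasDeriv y).pow 2))
      refine this.congr_deriv ?_
      simp only [id_eq]; push_cast; ring
    have := hG.mul (g_hasDeriv y)
    refine this.congr_deriv ?_
    ring
  have hpos : ∀ y, x ≤ y → 0 < (r y * (1 - y * r y)) * g y := by
    intro y hy
    exact mul_pos (mul_pos (r_pos y) (by linarith [xr_lt_one y])) (g_pos y)
  have hlim : Tendsto (fun y => (1 - y * r y - r y ^ 2) * g y) atTop (𝓝 0) := by
    apply squeeze_zero_norm' (a := fun y => 3 * g y)
    · filter_upwards [eventually_ge_atTop (1:ℝ)] with y hy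
      have h1 := r_pos y
      have h2 := r_lt_one y hy
      have h3 := xr_lt_one y
      have h4 : 0 < y * r y := mul_pos (by linarith) h1
      have hb : |1 - y * r y - r y ^ 2| ≤ 3 := by
        rw [abs_le]; constructor <;> nlinarith
      rw [Real.norm_eq_abs, abs_mul, abs_of_pos (g_pos y)]
      exact mul_le_mul_of_nonneg_right hb (g_pos y).le
    · simpa using g_tendsto.const_mul 3
  have hkey := key_neg _ _ x hd hpos hlim
  nlinarith [g_pos x, hkey]

lemma upper_master (x : ℝ) (hx : 0 ≤ x) :
    millsRatio x ^ 2 < (1 - x * millsRatio x) * (2 - x * millsRatio x) := by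
  set r := millsRatio with hrdef
  have hd : ∀ y, x ≤ y → HasDerivAt
      (fun y => ((1 - y * r y) * (2 - y * r y) - r y ^ 2) * g y)
      (((1 - y * r y) * (y * (1 - y * r y) - r y)) * g y) y := by
    intro y _
    have hA : HasDerivAt (fun y => 1 - y * r y) (-(1 * r y + y * (y * r y - 1))) y := by
      have := (hasDerivAt_const y (1:ℝ)).sub ((hasDerivAt_id y).mul (r_hasDeriv y))
      refine this.congr_deriv ?_
      simp only [id_eq]; ring
    have hB : HasDerivAt (fun y => 2 - y * r y) (-(1 * r y + y * (y * r y - 1))) y := by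
      have := (hasDerivAt_const y (2:ℝ)).sub ((hasDerivAt_id y).mul (r_hasDeriv y))
      refine this.congr_deriv ?_
      simp only [id_eq]; ring
    have hH := (hA.mul hB).sub ((r_hasDeriv y).pow 2)
    have := hH.mul (g_hasDeriv y)
    refine this.congr_deriv ?_
    simp only [Pi.mul_apply, Pi.sub_apply, Pi.pow_apply, hrdef]; push_cast; ring
  have hneg : ∀ y, x ≤ y → ((1 - y * r y) * (y * (1 - y * r y) - r y)) * g y < 0 := by
    intro y hy
    have hy0 : 0 ≤ y := le_trans hx hy
    have h1 : 0 < 1 - y * r y := by linarith [xr_lt_one y]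
    have h2 : y * (1 - y * r y) - r y < 0 := by
      nlinarith [lower_master y hy0, r_pos y, sq_nonneg (y * r y - 1)]
    exact mul_neg_of_neg_of_pos (mul_neg_of_pos_of_neg h1 h2) (g_pos y)
  have hlim : Tendsto (fun y => ((1 - y * r y) * (2 - y * r y) - r y ^ 2) * g y)
      atTop (𝓝 0) := by
    apply squeeze_zero_norm' (a := fun y => 7 * g y)
    · filter_upwards [eventually_ge_atTop (1:ℝ)] with y hy
      have h1 := r_pos y
      have h2 := r_lt_one y hy
      have h3 := xr_lt_one y
      have h4 : 0 < y * r y := mul_pos (by linarith) h1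
      have hb : |(1 - y * r y) * (2 - y * r y) - r y ^ 2| ≤ 7 := by
        rw [abs_le]; constructor <;> nlinarith
      rw [Real.norm_eq_abs, abs_mul, abs_of_pos (g_pos y)]
      exact mul_le_mul_of_nonneg_right hb (g_pos y).le
    · simpa using g_tendsto.const_mul 7
  have hkey := key_pos _ _ x hd hneg hlim
  nlinarith [g_pos x, hkey]

end MillsAux

set_option maxHeartbeats 1000000 in
/-- For `x ≥ 0`,
`2/(x + √(x² + 4)) < r(x) < 4/(3x + √(x² + 8))`. -/
theorem millsRatio_bounds (x : ℝ) (hx : 0 ≤ x) :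
    2 / (x + Real.sqrt (x ^ 2 + 4)) < millsRatio x ∧
    millsRatio x < 4 / (3 * x + Real.sqrt (x ^ 2 + 8)) := by
  have hr := MillsAux.r_pos x
  have hxr := MillsAux.xr_lt_one x
  constructor
  · set s := Real.sqrt (x ^ 2 + 4) with hs
    have hs2 : s ^ 2 = x ^ 2 + 4 := Real.sq_sqrt (by positivity)
    have hs0 : 0 < s := Real.sqrt_pos.mpr (by positivity)
    have hm := MillsAux.lower_master x hx
    rw [div_lt_iff₀ (by positivity)]
    have h1 : s < 2 * millsRatio x + x := by
      nlinarith [sq_nonneg (2 * millsRatio x + x - s)]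
    nlinarith [mul_pos (sub_pos.mpr h1) (show (0:ℝ) < x + s by positivity)]
  · set s := Real.sqrt (x ^ 2 + 8) with hs
    have hs2 : s ^ 2 = x ^ 2 + 8 := Real.sq_sqrt (by positivity)
    have hs0 : 0 < s := Real.sqrt_pos.mpr (by positivity)
    have hm := MillsAux.upper_master x hx
    rw [lt_div_iff₀ (by positivity)]
    have h1 : millsRatio x * s < 4 - 3 * (x * millsRatio x) := by
      nlinarith [mul_nonneg hr.le hs0.le, sq_nonneg (millsRatio x * s - (4 - 3 * x * millsRatio x)),
        sq_nonneg (millsRatio x * s + (4 - 3 * x * millsRatio x))]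
    nlinarith [h1]
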